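/- An inverse semigroup S with zero is congruence-free if and only if it is fundamental, 0-simple, and its semilattice of idempotents E(S) is 0-disjunctive. -/
import Mathlib


/-- An inverse semigroup with zero. -/
class InverseSemigroup0 (S : Type*) extends Semigroup S, Zero S, Star S where
  zero_mul : ∀ s : S, 0 * s = 0
  mul_zero : ∀ s : S, s * 0 = 0
  mul_star_mul_self : ∀ s : S, s * star s * s = s
  star_mul_self_star : ∀ s : S, star s * s * star s = star s
  star_unique : ∀ s t : S, s * t * s = s → t * s * t = t → t = star s

/-- The natural partial order on an inverse semigroup. -/
def NatLe {S : Type*} [InverseSemigroup0 S] (a b : S) : Prop := a = b * star a * a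

/-- `S` is fundamental: the centralizer of the idempotents consists of idempotents. -/
def Fundamental (S : Type*) [InverseSemigroup0 S] : Prop :=
  ∀ s : S, (∀ e : S, IsIdempotentElem e → s * e = e * s) → IsIdempotentElem s

/-- The semilattice of idempotents of `S` is 0-disjunctive. -/
def ZeroDisjunctive (S : Type*) [InverseSemigroup0 S] : Prop :=
  ∀ e f : S, IsIdempotentElem e → IsIdempotentElem f → f ≠ 0 → NatLe f e → f ≠ e →
    ∃ g : S, g ≠ 0 ∧ IsIdempotentElem g ∧ NatLe g e ∧ f * g = 0

/-- `S` is 0-simple: it is non-trivial and `S s S = S` for every `s ≠ 0`. -/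
def ZeroSimple (S : Type*) [InverseSemigroup0 S] : Prop :=
  (∃ s : S, s ≠ 0) ∧ ∀ s : S, s ≠ 0 → ∀ t : S, ∃ a b : S, a * s * b = t

/-- `S` (non-trivial, with zero) is congruence-free: its only congruences are the
equality relation and the universal relation. -/
def CongruenceFree (S : Type*) [InverseSemigroup0 S] : Prop :=
  (∃ s : S, s ≠ 0) ∧
    ∀ r : S → S → Prop, Equivalence r →
      (∀ a b c d : S, r a b → r c d → r (a * c) (b * d)) →
      (∀ a b : S, r a b ↔ a = b) ∨ (∀ a b : S, r a b)

section Basic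
variable {S : Type*} [InverseSemigroup0 S]

private lemma zmul (s : S) : (0 : S) * s = 0 := InverseSemigroup0.zero_mul s
private lemma mulz (s : S) : s * 0 = 0 := InverseSemigroup0.mul_zero s
private lemma msm (s : S) : s * star s * s = s := InverseSemigroup0.mul_star_mul_self s
private lemma sms (s : S) : star s * s * star s = star s := InverseSemigroup0.star_mul_self_star s
private lemma star_uniq {s t : S} (h1 : s * t * s = s) (h2 : t * s * t = t) : t = star s :=
  InverseSemigroup0.star_unique s t h1 h2

private lemma is0_star_star (s : S) : star (star s) = s := (star_uniq (sms s) (msm s)).symm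

private lemma idem_sm (s : S) : IsIdempotentElem (star s * s) := by
  show star s * s * (star s * s) = star s * s
  rw [← mul_assoc, sms]

private lemma idem_ms (s : S) : IsIdempotentElem (s * star s) := by
  show s * star s * (s * star s) = s * star s
  rw [← mul_assoc, msm]

private lemma star_idem {e : S} (he : IsIdempotentElem e) : star e = e := by
  have h : e * e * e = e := by rw [he.eq, he.eq]
  exact (star_uniq h h).symm

private lemma is0_star_zero : star (0 : S) = 0 := by
  have h : (0 : S) * 0 * 0 = 0 := by rw [mulz]
  exact (star_uniq h h).symm

private lemma idem_zero : IsIdempotentElem (0 : S) := mulz 0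
end Basic
section Basic2
variable {S : Type*} [InverseSemigroup0 S]

private lemma idem_mul_aux {e f : S} (he : IsIdempotentElem e) (hf : IsIdempotentElem f) :
    IsIdempotentElem (e * f) ∧ star (e * f) = e * f := by
  have hec : ∀ x : S, e * (e * x) = e * x := fun x => by rw [← mul_assoc, he.eq]
  have hfc : ∀ x : S, f * (f * x) = f * x := fun x => by rw [← mul_assoc, hf.eq]
  have key : ∀ x : S, star (e*f) * (e * (f * (star (e*f) * x))) = star (e*f) * x := by
    intro x
    calc star (e*f) * (e * (f * (star (e*f) * x)))
        = (star (e*f) * (e*f) * star (e*f)) * x := by simp only [mul_assoc]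
      _ = star (e*f) * x := by rw [sms]
  have h1 : (e * f) * (f * star (e*f) * e) * (e * f) = e * f := by
    have key1 := msm (e * f)
    simp only [mul_assoc] at key1 ⊢
    rw [hfc, hec]; exact key1
  have h2 : (f * star (e*f) * e) * (e * f) * (f * star (e*f) * e) = f * star (e*f) * e := by
    simp only [mul_assoc]
    rw [hec, hfc, key]
  have hfbe : f * star (e*f) * e = star (e*f) := star_uniq h1 h2
  have hbb : IsIdempotentElem (star (e*f)) := by
    show star (e*f) * star (e*f) = star (e*f)
    calc star (e*f) * star (e*f) = (f * star (e*f) * e) * (f * star (e*f) * e) := by rw [hfbe]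
      _ = f * (star (e*f) * (e * (f * (star (e*f) * e)))) := by simp only [mul_assoc]
      _ = f * (star (e*f) * e) := by rw [key]
      _ = star (e*f) := by rw [← mul_assoc, hfbe]
  have heq : e * f = star (star (e*f)) :=
    star_uniq (by rw [sms]) (by rw [msm])
  have heq2 : e * f = star (e*f) := by rw [heq, star_idem hbb, star_idem hbb]
  have hidem : IsIdempotentElem (e * f) := by rw [heq2]; exact hbb
  exact ⟨hidem, heq2.symm⟩

private lemma idem_mul {e f : S} (he : IsIdempotentElem e) (hf : IsIdempotentElem f) :
    IsIdempotentElem (e * f) := (idem_mul_aux he hf).1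

private lemma idem_comm {e f : S} (he : IsIdempotentElem e) (hf : IsIdempotentElem f) :
    e * f = f * e := by
  have hec : ∀ x : S, e * (e * x) = e * x := fun x => by rw [← mul_assoc, he.eq]
  have hfc : ∀ x : S, f * (f * x) = f * x := fun x => by rw [← mul_assoc, hf.eq]
  have hef := (idem_mul_aux he hf).1
  have hfe := (idem_mul_aux hf he).1
  have hef' := hef.eq
  have hfe' := hfe.eq
  simp only [mul_assoc] at hef' hfe'
  have h1 : (e*f) * (f*e) * (e*f) = e*f := by
    simp only [mul_assoc]; rw [hfc, hec]; exact hef'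
  have h2 : (f*e) * (e*f) * (f*e) = f*e := by
    simp only [mul_assoc]; rw [hec, hfc]; exact hfe'
  have : f * e = star (e * f) := star_uniq h1 h2
  rw [this, (idem_mul_aux he hf).2]

private lemma is0_star_mul (a b : S) : star (a * b) = star b * star a := by
  have hcomm := idem_comm (idem_ms b) (idem_sm a)
  have h1 : (a * b) * (star b * star a) * (a * b) = a * b := by
    calc (a * b) * (star b * star a) * (a * b)
        = a * ((b * star b) * (star a * a)) * b := by simp only [mul_assoc]
      _ = a * ((star a * a) * (b * star b)) * b := by rw [hcomm]
      _ = (a * star a * a) * (b * star b * b) := by simp only [mul_assoc]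
      _ = a * b := by rw [msm, msm]
  have h2 : (star b * star a) * (a * b) * (star b * star a) = star b * star a := by
    calc (star b * star a) * (a * b) * (star b * star a)
        = star b * ((star a * a) * (b * star b)) * star a := by simp only [mul_assoc]
      _ = star b * ((b * star b) * (star a * a)) * star a := by rw [← hcomm]
      _ = (star b * b * star b) * (star a * a * star a) := by simp only [mul_assoc]
      _ = star b * star a := by rw [sms, sms]
  exact (star_uniq h1 h2).symm

private lemma idem_conj {e : S} (he : IsIdempotentElem e) (s : S) :
    IsIdempotentElem (star s * e * s) := by
  have hcomm := idem_comm he (idem_ms s)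
  show (star s * e * s) * (star s * e * s) = star s * e * s
  calc (star s * e * s) * (star s * e * s)
      = star s * (e * (s * star s)) * (e * s) := by simp only [mul_assoc]
    _ = star s * ((s * star s) * e) * (e * s) := by rw [← hcomm]
    _ = (star s * s * star s) * (e * (e * s)) := by simp only [mul_assoc]
    _ = (star s * s * star s) * (e * s) := by rw [← mul_assoc e, he.eq]
    _ = star s * e * s := by rw [sms, mul_assoc]
end Basic2
section Cong
variable {S : Type*} [InverseSemigroup0 S] {r : S → S → Prop}

private lemma lallement (hr : Equivalence r)
    (hm : ∀ a b c d : S, r a b → r c d → r (a * c) (b * d))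
    {x : S} (h : r (x * x) x) : ∃ e : S, IsIdempotentElem e ∧ r e x := by
  refine ⟨x * star (x*x) * x, ?_, ?_⟩
  · show (x * star (x*x) * x) * (x * star (x*x) * x) = x * star (x*x) * x
    calc (x * star (x*x) * x) * (x * star (x*x) * x)
        = x * (star (x*x) * (x*x) * star (x*x)) * x := by simp only [mul_assoc]
      _ = x * star (x*x) * x := by rw [sms]
  · have h1 : r ((x*x) * star (x*x) * (x*x)) ((x*x) * star (x*x) * x) :=
      hm _ _ _ _ (hr.refl ((x*x) * star (x*x))) h
    rw [msm (x*x)] at h1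
    have h2 : r ((x*x) * (star (x*x) * x)) (x * (star (x*x) * x)) :=
      hm _ _ _ _ h (hr.refl _)
    simp only [mul_assoc] at h1 h2 ⊢
    exact hr.trans (hr.trans (hr.symm h2) (hr.symm h1)) h

private lemma ridem_comm (hr : Equivalence r)
    (hm : ∀ a b c d : S, r a b → r c d → r (a * c) (b * d))
    {x y : S} (hx : r (x * x) x) (hy : r (y * y) y) : r (x * y) (y * x) := by
  obtain ⟨e, he, hex⟩ := lallement hr hm hx
  obtain ⟨f, hf, hfy⟩ := lallement hr hm hy
  have h1 : r (x * y) (e * f) := hm _ _ _ _ (hr.symm hex) (hr.symm hfy)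
  rw [idem_comm he hf] at h1
  exact hr.trans h1 (hm _ _ _ _ hfy hex)

private lemma rstar (hr : Equivalence r)
    (hm : ∀ a b c d : S, r a b → r c d → r (a * c) (b * d))
    {a b : S} (h : r a b) : r (star a) (star b) := by
  have hml : ∀ (x : S) {c d : S}, r c d → r (x * c) (x * d) :=
    fun x _ _ hcd => hm _ _ _ _ (hr.refl x) hcd
  have hmr : ∀ (x : S) {c d : S}, r c d → r (c * x) (d * x) :=
    fun x _ _ hcd => hm _ _ _ _ hcd (hr.refl x)
  -- f1 : a (star b) a  ~  a
  have f1 : r (a * (star b * a)) a := by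
    have s1 : r (a * (star b * a)) (b * (star b * a)) := hmr _ h
    have s2 : r (b * (star b * a)) (b * (star b * b)) := hml _ (hml _ h)
    have s3 : b * (star b * b) = b := by rw [← mul_assoc, msm]
    rw [s3] at s2
    exact hr.trans (hr.trans s1 s2) (hr.symm h)
  -- f2 : (star b) a (star b) ~ star b
  have f2 : r (star b * (a * star b)) (star b) := by
    have s1 : r (star b * (a * star b)) (star b * (b * star b)) := hml _ (hmr _ h)
    have s3 : star b * (b * star b) = star b := by rw [← mul_assoc, sms]
    rwa [s3] at s1
  -- r-idempotents
  have huw : r ((a * star b) * (a * star b)) (a * star b) := by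
    have := hmr (star b) f1
    simpa only [mul_assoc] using this
  have hwu : r ((star b * a) * (star b * a)) (star b * a) := by
    have := hml (star b) f1
    simpa only [mul_assoc] using this
  have hvu : r ((star a * a) * (star a * a)) (star a * a) := by
    rw [(idem_sm a).eq]; exact hr.refl _
  have huv : r ((a * star a) * (a * star a)) (a * star a) := by
    rw [(idem_ms a).eq]; exact hr.refl _
  -- Derivation 1 : star a ~ star a * (a * star b)
  have q1 : r (star a * (a * (star b * (a * star a)))) (star a) := by
    have t := hmr (star a) (hml (star a) f1)
    simp only [mul_assoc] at t
    have e1 : star a * (a * star a) = star a := by rw [← mul_assoc, sms]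
    rwa [e1] at t
  have c1 : r ((a * star b) * (a * star a)) ((a * star a) * (a * star b)) :=
    ridem_comm hr hm huw huv
  have d2 : r (star a * (a * (star b * (a * star a)))) (star a * (a * (star a * (a * star b)))) := by
    have := hml (star a) c1
    simpa only [mul_assoc] using this
  have e2 : star a * (a * (star a * (a * star b))) = star a * (a * star b) := by
    calc star a * (a * (star a * (a * star b)))
        = (star a * a * star a) * (a * star b) := by simp only [mul_assoc]
      _ = star a * (a * star b) := by rw [sms]
  rw [e2] at d2
  have D1 : r (star a) (star a * (a * star b)) := hr.trans (hr.symm q1) d2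
  -- Derivation 2 : star b ~ star a * (a * star b)
  have c2 : r ((star b * a) * (star a * a)) ((star a * a) * (star b * a)) :=
    ridem_comm hr hm hwu hvu
  have d3 : r (star b * (a * (star a * (a * star b)))) (star a * (a * (star b * (a * star b)))) := by
    have := hmr (star b) c2
    simpa only [mul_assoc] using this
  have d4 : r (star a * (a * (star b * (a * star b)))) (star a * (a * star b)) :=
    hml (star a) (hml a f2)
  have e3 : star b * (a * (star a * (a * star b))) = star b * (a * star b) := by
    calc star b * (a * (star a * (a * star b)))
        = star b * ((a * star a * a) * star b) := by simp only [mul_assoc]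
      _ = star b * (a * star b) := by rw [msm]
  rw [e3] at d3
  have D2 : r (star b) (star a * (a * star b)) :=
    hr.trans (hr.symm f2) (hr.trans d3 d4)
  exact hr.trans D1 (hr.symm D2)
end Cong
section Backward
variable {S : Type*} [InverseSemigroup0 S] {r : S → S → Prop}

private lemma sm_ne_zero {s : S} (h : s ≠ 0) : star s * s ≠ 0 := fun h0 =>
  h (by rw [← msm s, mul_assoc, h0, mulz])

private lemma rees_univ (hS : ZeroSimple S) (hr : Equivalence r)
    (hm : ∀ a b c d : S, r a b → r c d → r (a * c) (b * d))
    {s : S} (hs : s ≠ 0) (h : r s 0) : ∀ a b : S, r a b := by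
  have key : ∀ t : S, r t 0 := by
    intro t
    obtain ⟨p, q, hpq⟩ := hS.2 s hs t
    have h1 : r (p * s * q) (p * 0 * q) :=
      hm _ _ _ _ (hm _ _ _ _ (hr.refl p) h) (hr.refl q)
    rw [hpq, mulz, zmul] at h1
    exact h1
  exact fun a b => hr.trans (key a) (hr.symm (key b))

private lemma idem_pair_univ (hS : ZeroSimple S) (hD : ZeroDisjunctive S)
    (hr : Equivalence r) (hm : ∀ a b c d : S, r a b → r c d → r (a * c) (b * d))
    {e h : S} (he : IsIdempotentElem e) (hh : IsIdempotentElem h)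
    (hne : e ≠ h) (heh : e * h = h) (hreh : r e h) : ∀ a b : S, r a b := by
  by_cases h0 : h = 0
  · subst h0; exact rees_univ hS hr hm hne hreh
  · have hle : NatLe h e := by
      show h = e * star h * h
      rw [star_idem hh, mul_assoc, hh.eq, heh]
    obtain ⟨g, hg0, hgidem, hgle, hfg⟩ := hD e h he hh h0 hle (Ne.symm hne)
    have hge : e * g = g := by
      have hx : g = e * star g * g := hgle
      rw [star_idem hgidem, mul_assoc, hgidem.eq] at hx
      exact hx.symm
    have h1 : r (e * g) (h * g) := hm _ _ _ _ hreh (hr.refl g)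
    rw [hge, hfg] at h1
    exact rees_univ hS hr hm hg0 h1

private lemma idem_rel_univ (hS : ZeroSimple S) (hD : ZeroDisjunctive S)
    (hr : Equivalence r) (hm : ∀ a b c d : S, r a b → r c d → r (a * c) (b * d))
    {e f : S} (he : IsIdempotentElem e) (hf : IsIdempotentElem f)
    (hne : e ≠ f) (href : r e f) : ∀ a b : S, r a b := by
  have hh : IsIdempotentElem (e * f) := idem_mul he hf
  have hre : r e (e * f) := by
    have h1 := hm _ _ _ _ (hr.refl e) href
    rwa [he.eq] at h1
  have hrf : r f (e * f) := by
    have h1 := hm _ _ _ _ (hr.refl f) (hr.symm href)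
    rw [hf.eq] at h1
    rwa [idem_comm hf he] at h1
  by_cases hcase : e = e * f
  · have hnef : f ≠ e * f := fun c => hne (hcase.trans c.symm)
    have hfef : f * (e * f) = e * f := by
      rw [← mul_assoc, idem_comm hf he, mul_assoc, hf.eq]
    exact idem_pair_univ hS hD hr hm hf hh hnef hfef hrf
  · have heef : e * (e * f) = e * f := by rw [← mul_assoc, he.eq]
    exact idem_pair_univ hS hD hr hm he hh hcase heef hre

private lemma mu_c_idem (hF : Fundamental S) {a b : S}
    (hmu : ∀ e : S, IsIdempotentElem e → star a * e * a = star b * e * b) :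
    IsIdempotentElem (a * star b) := by
  apply hF
  intro e heI
  calc a * star b * e
      = a * ((star b * b * star b) * e) := by rw [sms, mul_assoc]
    _ = a * (star b * ((b * star b) * e)) := by simp only [mul_assoc]
    _ = a * (star b * (e * (b * star b))) := by rw [idem_comm (idem_ms b) heI]
    _ = a * ((star b * e * b) * star b) := by simp only [mul_assoc]
    _ = a * ((star a * e * a) * star b) := by rw [← hmu e heI]
    _ = (a * star a) * e * (a * star b) := by simp only [mul_assoc]
    _ = (e * (a * star a)) * (a * star b) := by rw [idem_comm (idem_ms a) heI]
    _ = e * ((a * star a * a) * star b) := by simp only [mul_assoc]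
    _ = e * (a * star b) := by rw [msm]

private lemma mu_triv (hF : Fundamental S) {a b : S}
    (hmu : ∀ e : S, IsIdempotentElem e → star a * e * a = star b * e * b) : a = b := by
  have hmu' : ∀ e : S, IsIdempotentElem e → star b * e * b = star a * e * a :=
    fun e he => (hmu e he).symm
  have hα : star a * (b * star b) * a = star b * b := by
    rw [hmu _ (idem_ms b)]
    calc star b * (b * star b) * b
        = star b * (b * (star b * b)) := by simp only [mul_assoc]
      _ = star b * b := by rw [← mul_assoc, ← mul_assoc, sms]
  have hβ : star b * (a * star a) * b = star a * a := by
    rw [hmu' _ (idem_ms a)]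
    calc star a * (a * star a) * a
        = star a * (a * (star a * a)) := by simp only [mul_assoc]
      _ = star a * a := by rw [← mul_assoc, ← mul_assoc, sms]
  have hc : IsIdempotentElem (a * star b) := mu_c_idem hF hmu
  have hd : IsIdempotentElem (b * star a) := mu_c_idem hF hmu'
  have hcd : a * star b = b * star a := by
    have h1 := star_idem hc
    rw [is0_star_mul, is0_star_star] at h1
    exact h1.symm
  have hζ : a * (star a * b) = b * (star a * a) := by
    have t1 : b * (star b * (a * star a) * b) = b * (star a * a) := by rw [hβ]
    have t2 : b * (star b * (a * star a) * b) = a * (star a * b) := by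
      calc b * (star b * (a * star a) * b)
          = (b * star b) * (a * star a) * b := by simp only [mul_assoc]
        _ = (a * star a) * (b * star b) * b := by rw [idem_comm (idem_ms b) (idem_ms a)]
        _ = a * (star a * (b * star b * b)) := by simp only [mul_assoc]
        _ = a * (star a * b) := by rw [msm]
    exact t2.symm.trans t1
  have hε : b * (star b * a) = a * (star b * b) := by
    have t1 : a * (star a * (b * star b) * a) = a * (star b * b) := by rw [hα]
    have t2 : a * (star a * (b * star b) * a) = b * (star b * a) := by
      calc a * (star a * (b * star b) * a)
          = (a * star a) * (b * star b) * a := by simp only [mul_assoc]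
        _ = (b * star b) * (a * star a) * a := by rw [idem_comm (idem_ms a) (idem_ms b)]
        _ = b * (star b * (a * star a * a)) := by simp only [mul_assoc]
        _ = b * (star b * a) := by rw [msm]
    exact t2.symm.trans t1
  have hη : star a * a = (star b * b) * (star a * a) := by
    have u1 : star b * (a * (star a * b)) = star b * (b * (star a * a)) := by rw [hζ]
    have u2 : star b * (a * (star a * b)) = star a * a := by
      calc star b * (a * (star a * b)) = star b * (a * star a) * b := by simp only [mul_assoc]
        _ = star a * a := hβ
    have u3 : star b * (b * (star a * a)) = (star b * b) * (star a * a) := by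
      simp only [mul_assoc]
    exact u2.symm.trans (u1.trans u3)
  have hθ : star b * b = (star a * a) * (star b * b) := by
    have v1 : star a * (b * (star b * a)) = star a * (a * (star b * b)) := by rw [hε]
    have v2 : star a * (b * (star b * a)) = star b * b := by
      calc star a * (b * (star b * a)) = star a * (b * star b) * a := by simp only [mul_assoc]
        _ = star b * b := hα
    have v3 : star a * (a * (star b * b)) = (star a * a) * (star b * b) := by
      simp only [mul_assoc]
    exact v2.symm.trans (v1.trans v3)
  have hi : star a * a = star b * b := by
    rw [hη, idem_comm (idem_sm b) (idem_sm a), ← hθ]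
  have ha : a = (a * star b) * b := by
    calc a = a * (star a * a) := by rw [← mul_assoc, msm]
      _ = a * (star b * b) := by rw [hi]
      _ = (a * star b) * b := by rw [mul_assoc]
  have hb : b = (a * star b) * a := by
    calc b = b * (star b * b) := by rw [← mul_assoc, msm]
      _ = b * (star a * a) := by rw [hi]
      _ = (b * star a) * a := by rw [mul_assoc]
      _ = (a * star b) * a := by rw [hcd]
  calc a = (a * star b) * b := ha
    _ = (a * star b) * ((a * star b) * a) := by rw [← hb]
    _ = ((a * star b) * (a * star b)) * a := by simp only [mul_assoc]
    _ = (a * star b) * a := by rw [hc.eq]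
    _ = b := hb.symm

private lemma backward_dir (hF : Fundamental S) (hS : ZeroSimple S) (hD : ZeroDisjunctive S) :
    CongruenceFree S := by
  refine ⟨hS.1, ?_⟩
  intro r hr hm
  by_cases hcase : ∀ a b : S, r a b → a = b
  · exact Or.inl fun a b => ⟨hcase a b, fun h => h ▸ hr.refl a⟩
  · right
    push_neg at hcase
    obtain ⟨a, b, hab, hne⟩ := hcase
    by_cases hall : ∀ e : S, IsIdempotentElem e → star a * e * a = star b * e * b
    · exact absurd (mu_triv hF hall) hne
    · push_neg at hall
      obtain ⟨e, heI, hneq⟩ := hall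
      have hrel : r (star a * e * a) (star b * e * b) :=
        hm _ _ _ _ (hm _ _ _ _ (rstar hr hm hab) (hr.refl e)) hab
      exact idem_rel_univ hS hD hr hm (idem_conj heI a) (idem_conj heI b) hneq hrel
end Backward
section Forward
variable {S : Type*} [InverseSemigroup0 S]

private lemma forward_simple (hCF : CongruenceFree S) : ZeroSimple S := by
  refine ⟨hCF.1, ?_⟩
  intro s hs t
  let P : S → Prop := fun x => ∃ p q : S, p * s * q = x
  have hP0 : P 0 := ⟨0, 0, by rw [zmul, zmul]⟩
  have hPs : P s := ⟨s * star s, star s * s, by rw [msm, ← mul_assoc, msm]⟩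
  have hPl : ∀ x y : S, P y → P (x * y) := by
    rintro x y ⟨p, q, h⟩
    exact ⟨x * p, q, by rw [← h]; simp only [mul_assoc]⟩
  have hPr : ∀ x y : S, P y → P (y * x) := by
    rintro x y ⟨p, q, h⟩
    exact ⟨p, q * x, by rw [← h]; simp only [mul_assoc]⟩
  have hEq : Equivalence (fun a b : S => a = b ∨ (P a ∧ P b)) := by
    constructor
    · exact fun a => Or.inl rfl
    · rintro a b (rfl | ⟨h1, h2⟩); exacts [Or.inl rfl, Or.inr ⟨h2, h1⟩]
    · rintro a b c (rfl | ⟨h1, h2⟩) (rfl | ⟨h3, h4⟩)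
      exacts [Or.inl rfl, Or.inr ⟨h3, h4⟩, Or.inr ⟨h1, h2⟩, Or.inr ⟨h1, h4⟩]
  have hM : ∀ a b c d : S, (a = b ∨ (P a ∧ P b)) → (c = d ∨ (P c ∧ P d)) →
      (a * c = b * d ∨ (P (a * c) ∧ P (b * d))) := by
    rintro a b c d (rfl | ⟨h1, h2⟩) (rfl | ⟨h3, h4⟩)
    · exact Or.inl rfl
    · exact Or.inr ⟨hPl a c h3, hPl a d h4⟩
    · exact Or.inr ⟨hPr c a h1, hPr c b h2⟩
    · exact Or.inr ⟨hPr c a h1, hPr d b h2⟩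
  rcases hCF.2 _ hEq hM with heq | huniv
  · exact absurd ((heq s 0).mp (Or.inr ⟨hPs, hP0⟩)) hs
  · rcases huniv t 0 with rfl | ⟨⟨p, q, h⟩, -⟩
    · exact ⟨0, 0, by rw [zmul, zmul]⟩
    · exact ⟨p, q, h⟩

private lemma forward_fund (hCF : CongruenceFree S) : Fundamental S := by
  intro s hcomm
  let rel : S → S → Prop := fun a b =>
    ∀ e : S, IsIdempotentElem e → star a * e * a = star b * e * b
  have hEq : Equivalence rel := by
    constructor
    · exact fun a e he => rfl
    · exact fun h e he => (h e he).symm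
    · exact fun h1 h2 e he => (h1 e he).trans (h2 e he)
  have hCR : ∀ a b c : S, rel a b → rel (a * c) (b * c) := by
    intro a b c h e he
    calc star (a * c) * e * (a * c)
        = star c * (star a * e * a) * c := by rw [is0_star_mul]; simp only [mul_assoc]
      _ = star c * (star b * e * b) * c := by rw [h e he]
      _ = star (b * c) * e * (b * c) := by rw [is0_star_mul]; simp only [mul_assoc]
  have hCL : ∀ a b c : S, rel a b → rel (c * a) (c * b) := by
    intro a b c h e he
    calc star (c * a) * e * (c * a)
        = star a * (star c * e * c) * a := by rw [is0_star_mul]; simp only [mul_assoc]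
      _ = star b * (star c * e * c) * b := h _ (idem_conj he c)
      _ = star (c * b) * e * (c * b) := by rw [is0_star_mul]; simp only [mul_assoc]
  have hM : ∀ a b c d : S, rel a b → rel c d → rel (a * c) (b * d) := by
    intro a b c d h1 h2
    exact hEq.trans (hCR a b c h1) (hCL c d b h2)
  rcases hCF.2 rel hEq hM with heq | huniv
  · have hrel : rel s (star s * s) := by
      intro e he
      have hR : star (star s * s) * e * (star s * s) = (star s * s) * e := by
        calc star (star s * s) * e * (star s * s)
            = (star s * s) * e * (star s * s) := by rw [star_idem (idem_sm s)]
          _ = (e * (star s * s)) * (star s * s) := by rw [idem_comm (idem_sm s) he]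
          _ = e * ((star s * s) * (star s * s)) := by simp only [mul_assoc]
          _ = e * (star s * s) := by rw [(idem_sm s).eq]
          _ = (star s * s) * e := by rw [idem_comm he (idem_sm s)]
      rw [hR]
      calc star s * e * s = star s * (s * e) := by rw [mul_assoc, ← hcomm e he]
        _ = star s * s * e := by rw [mul_assoc]
    have hs : s = star s * s := (heq s (star s * s)).mp hrel
    have := idem_sm s
    rwa [← hs] at this
  · exfalso
    obtain ⟨s0, hs0⟩ := hCF.1
    have h := huniv 0 (star s0 * s0) (star s0 * s0) (idem_sm s0)
    rw [mulz, star_idem (idem_sm s0), (idem_sm s0).eq, (idem_sm s0).eq] at h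
    exact sm_ne_zero hs0 h.symm

private lemma theta_left {h : S} (hI : IsIdempotentElem h) (x : S) :
    x * h = 0 ↔ h * (star x * x) = 0 := by
  constructor
  · intro h0
    have t : (star x * x) * h = 0 := by rw [mul_assoc, h0, mulz]
    rwa [idem_comm (idem_sm x) hI] at t
  · intro h0
    have idx : x * (h * (star x * x)) = x * h := by
      calc x * (h * (star x * x)) = x * ((star x * x) * h) := by rw [idem_comm hI (idem_sm x)]
        _ = (x * star x * x) * h := by simp only [mul_assoc]
        _ = x * h := by rw [msm]
    rw [← idx, h0, mulz]

private lemma theta_right {h : S} (_hI : IsIdempotentElem h) (y : S) :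
    h * y = 0 ↔ h * (y * star y) = 0 := by
  constructor
  · intro h0
    have t : h * y = h * (y * star y) * y := by rw [mul_assoc, msm]
    rw [← mul_assoc, h0, zmul]
  · intro h0
    have t : h * y = h * (y * star y) * y := by rw [mul_assoc, msm]
    rw [t, h0, zmul]

private lemma theta_both {h : S} (hI : IsIdempotentElem h) (x y : S) :
    x * h * y = 0 ↔ h * ((star x * x) * (y * star y)) = 0 := by
  constructor
  · intro h0
    have t : star x * (x * h * y) * star y = 0 := by rw [h0, mulz, zmul]
    have t2 : (star x * x) * h * (y * star y) = 0 := by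
      rw [← t]; simp only [mul_assoc]
    rw [idem_comm (idem_sm x) hI] at t2
    rw [← mul_assoc]
    exact t2
  · intro h0
    have idq : x * (h * ((star x * x) * (y * star y))) * y = x * h * y := by
      calc x * (h * ((star x * x) * (y * star y))) * y
          = x * ((h * (star x * x)) * (y * star y)) * y := by simp only [mul_assoc]
        _ = x * (((star x * x) * h) * (y * star y)) * y := by rw [idem_comm hI (idem_sm x)]
        _ = (x * star x * x) * (h * (y * star y * y)) := by simp only [mul_assoc]
        _ = x * (h * y) := by rw [msm, msm]
        _ = x * h * y := by rw [mul_assoc]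
    rw [← idq, h0, mulz, zmul]

private lemma forward_disj (hCF : CongruenceFree S) : ZeroDisjunctive S := by
  intro e f he hf hf0 hle hne
  by_contra hno
  push_neg at hno
  have hef : e * f = f := by
    have h1 : f = e * star f * f := hle
    rw [star_idem hf, mul_assoc, hf.eq] at h1
    exact h1.symm
  have hfe : f * e = f := by rw [idem_comm hf he, hef]
  -- key equivalence
  have key : ∀ m : S, IsIdempotentElem m → (e * m = 0 ↔ f * m = 0) := by
    intro m hm
    constructor
    · intro h0
      have t : f * m = f * (e * m) := by rw [← mul_assoc, hfe]
      rw [t, h0, mulz]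
    · intro h0
      by_contra hem
      have hgidem : IsIdempotentElem (e * m) := idem_mul he hm
      have heg : e * (e * m) = e * m := by rw [← mul_assoc, he.eq]
      have hgle : NatLe (e * m) e := by
        show e * m = e * star (e * m) * (e * m)
        rw [star_idem hgidem, mul_assoc, hgidem.eq, heg]
      have hfg : f * (e * m) = 0 := by rw [← mul_assoc, hfe, h0]
      exact hno (e * m) hem hgidem hgle hfg
  -- the syntactic congruence
  let rel : S → S → Prop := fun a b =>
    (a = 0 ↔ b = 0) ∧ (∀ x : S, x * a = 0 ↔ x * b = 0) ∧
    (∀ y : S, a * y = 0 ↔ b * y = 0) ∧ (∀ x y : S, x * a * y = 0 ↔ x * b * y = 0)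
  have hEq : Equivalence rel := by
    constructor
    · exact fun a => ⟨Iff.rfl, fun x => Iff.rfl, fun y => Iff.rfl, fun x y => Iff.rfl⟩
    · exact fun h => ⟨h.1.symm, fun x => (h.2.1 x).symm, fun y => (h.2.2.1 y).symm,
        fun x y => (h.2.2.2 x y).symm⟩
    · exact fun h1 h2 => ⟨h1.1.trans h2.1, fun x => (h1.2.1 x).trans (h2.2.1 x),
        fun y => (h1.2.2.1 y).trans (h2.2.2.1 y),
        fun x y => (h1.2.2.2 x y).trans (h2.2.2.2 x y)⟩
  have hM : ∀ a b c d : S, rel a b → rel c d → rel (a * c) (b * d) := by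
    intro a b c d h1 h2
    refine ⟨?_, ?_, ?_, ?_⟩
    · exact (h1.2.2.1 c).trans (h2.2.1 b)
    · intro x
      rw [← mul_assoc, ← mul_assoc]
      exact (h1.2.2.2 x c).trans (h2.2.1 (x * b))
    · intro y
      rw [mul_assoc, mul_assoc]
      exact (h1.2.2.1 (c * y)).trans
        (by have t := h2.2.2.2 b y; rwa [mul_assoc, mul_assoc] at t)
    · intro x y
      have e1 : x * (a * c) * y = x * a * (c * y) := by simp only [mul_assoc]
      have e2 : x * (b * d) * y = x * b * (d * y) := by simp only [mul_assoc]
      rw [e1, e2]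
      exact (h1.2.2.2 x (c * y)).trans
        (by have t := h2.2.2.2 (x * b) y
            rwa [mul_assoc (x * b) c y, mul_assoc (x * b) d y] at t)
  rcases hCF.2 rel hEq hM with heq | huniv
  · -- rel e f holds, so e = f, contradiction
    have hrel : rel e f := by
      refine ⟨?_, ?_, ?_, ?_⟩
      · constructor
        · intro h0; exact (hf0 (by rw [← hef, h0, zmul])).elim
        · intro h0; exact (hf0 h0).elim
      · intro x
        exact (theta_left he x).trans ((key _ (idem_sm x)).trans (theta_left hf x).symm)
      · intro y
        exact (theta_right he y).trans ((key _ (idem_ms y)).trans (theta_right hf y).symm)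
      · intro x y
        exact (theta_both he x y).trans
          ((key _ (idem_mul (idem_sm x) (idem_ms y))).trans (theta_both hf x y).symm)
    exact hne ((heq e f).mp hrel).symm
  · obtain ⟨s0, hs0⟩ := hCF.1
    exact hs0 ((huniv s0 0).1.mpr rfl)
end Forward

/-- An inverse semigroup with zero is congruence-free iff it is fundamental,
0-simple, and its semilattice of idempotents is 0-disjunctive. -/
theorem stmt2 (S : Type*) [InverseSemigroup0 S] :
    CongruenceFree S ↔ Fundamental S ∧ ZeroSimple S ∧ ZeroDisjunctive S := by
  constructor
  · intro hCF
    exact ⟨forward_fund hCF, forward_simple hCF, forward_disj hCF⟩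
  · rintro ⟨hF, hS, hD⟩
    exact backward_dir hF hS hD
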